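/- Let (X, ‖·‖) be a real Banach space and let T : X → X be an enriched 𝒜-contraction. Then the fixed point problem for T is well-posed: T has a unique fixed point p ∈ X, and for every sequence (u_n) in X with ‖u_n − T u_n‖ → 0 as n → ∞, one has ‖u_n − p‖ → 0 as n → ∞. -/

import Mathlib

open Filter Topology


/-- Membership in the class `𝒜` of Akram-type comparison functions. -/
def MemA (f : ℝ × ℝ × ℝ → ℝ) : Prop :=
  ContinuousOn f {p : ℝ × ℝ × ℝ | 0 ≤ p.1 ∧ 0 ≤ p.2.1 ∧ 0 ≤ p.2.2} ∧
  (∃ k : ℝ, 0 ≤ k ∧ k < 1 ∧ ∀ r s : ℝ, 0 ≤ r → 0 ≤ s →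
    (r ≤ f (s, r, s) ∨ r ≤ f (r, s, s)) → r ≤ k * s) ∧
  (∀ lam : ℝ, 0 < lam → ∀ r s t : ℝ, 0 ≤ r → 0 ≤ s → 0 ≤ t →
    lam * f (r, s, t) ≤ f (lam * r, lam * s, lam * t))

/-- The fixed point problem of an enriched `𝒜`-contraction on a real Banach space
is well-posed. -/
theorem enriched_A_contraction_wellPosed
    {X : Type*} [NormedAddCommGroup X] [NormedSpace ℝ X] [CompleteSpace X]
    (T : X → X) (f : ℝ × ℝ × ℝ → ℝ) (hf : MemA f) (b : ℝ) (hb : 0 ≤ b)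
    (hT : ∀ u v : X, u ≠ v →
      ‖b • (u - v) + T u - T v‖ ≤ f ((b + 1) * ‖u - v‖, ‖u - T u‖, ‖v - T v‖)) :
    ∃ p : X, (T p = p ∧ ∀ q : X, T q = q → q = p) ∧
      ∀ u : ℕ → X,
        Filter.Tendsto (fun n => ‖u n - T (u n)‖) Filter.atTop (nhds 0) →
        Filter.Tendsto (fun n => ‖u n - p‖) Filter.atTop (nhds 0) := by
  obtain ⟨hcont, ⟨k, hk0, hk1, hkA⟩, hhom⟩ := hf
  have hB : (0:ℝ) < b + 1 := by linarith
  have hBne : (b:ℝ) + 1 ≠ 0 := ne_of_gt hB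
  set A : Set (ℝ × ℝ × ℝ) := {p : ℝ × ℝ × ℝ | 0 ≤ p.1 ∧ 0 ≤ p.2.1 ∧ 0 ≤ p.2.2} with hAdef
  set S : X → X := fun u => (b+1)⁻¹ • (b • u + T u) with hSdef
  have hsub : ∀ u : X, u - S u = (b+1)⁻¹ • (u - T u) := by
    intro u; simp only [hSdef]; match_scalars <;> field_simp <;> ring
  have hdiff : ∀ u v : X, S u - S v = (b+1)⁻¹ • (b • (u - v) + T u - T v) := by
    intro u v; simp only [hSdef]; match_scalars <;> field_simp
  have hnsub : ∀ u : X, ‖u - S u‖ = (b+1)⁻¹ * ‖u - T u‖ := by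
    intro u
    rw [hsub, norm_smul, Real.norm_eq_abs, abs_of_pos (inv_pos.mpr hB)]
  have hfixiff : ∀ u : X, S u = u ↔ T u = u := by
    intro u
    constructor
    · intro h
      have h2 := hsub u
      rw [h, sub_self] at h2
      have h3 : u - T u = 0 := by
        rcases smul_eq_zero.mp h2.symm with h4 | h4
        · exact absurd h4 (inv_ne_zero hBne)
        · exact h4
      exact (sub_eq_zero.mp h3).symm
    · intro h
      simp only [hSdef, h]
      match_scalars; field_simp
  have hS : ∀ u v : X, u ≠ v → ‖S u - S v‖ ≤ f (‖u - v‖, ‖u - S u‖, ‖v - S v‖) := by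
    intro u v huv
    have h1 : ‖S u - S v‖ = (b+1)⁻¹ * ‖b • (u - v) + T u - T v‖ := by
      rw [hdiff, norm_smul, Real.norm_eq_abs, abs_of_pos (inv_pos.mpr hB)]
    have h3 := hhom (b+1)⁻¹ (inv_pos.mpr hB) ((b+1) * ‖u - v‖) ‖u - T u‖ ‖v - T v‖
      (by positivity) (norm_nonneg _) (norm_nonneg _)
    have e1 : (b+1)⁻¹ * ((b+1) * ‖u - v‖) = ‖u - v‖ := by field_simp
    have e2 : (b+1)⁻¹ * ‖u - T u‖ = ‖u - S u‖ := (hnsub u).symm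
    have e3 : (b+1)⁻¹ * ‖v - T v‖ = ‖v - S v‖ := (hnsub v).symm
    rw [e1, e2, e3] at h3
    calc ‖S u - S v‖ = (b+1)⁻¹ * ‖b • (u - v) + T u - T v‖ := h1
      _ ≤ (b+1)⁻¹ * f ((b + 1) * ‖u - v‖, ‖u - T u‖, ‖v - T v‖) :=
          mul_le_mul_of_nonneg_left (hT u v huv) (by positivity)
      _ ≤ f (‖u - v‖, ‖u - S u‖, ‖v - S v‖) := h3
  -- iteration
  set x : ℕ → X := fun n => S^[n] 0 with hxdef
  have hxsucc : ∀ n, x (n+1) = S (x n) := fun n => Function.iterate_succ_apply' S n 0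
  set d : ℕ → ℝ := fun n => ‖x n - x (n+1)‖ with hddef
  have hd0 : ∀ n, 0 ≤ d n := fun n => norm_nonneg _
  have hdstep : ∀ n, d (n+1) ≤ k * d n := by
    intro n
    by_cases h : x (n+1) = x n
    · have h2 : x (n+2) = x (n+1) := by rw [hxsucc (n+1), h, ← hxsucc n]; exact h
      have : d (n+1) = 0 := by simp [hddef, h2]
      rw [this]; positivity
    · have hc := hS (x (n+1)) (x n) h
      rw [← hxsucc (n+1), ← hxsucc n] at hc
      have hc' : d (n+1) ≤ f (d n, d (n+1), d n) := by
        calc d (n+1) = ‖x (n+2) - x (n+1)‖ := norm_sub_rev _ _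
          _ ≤ f (‖x (n+1) - x n‖, ‖x (n+1) - x (n+2)‖, ‖x n - x (n+1)‖) := hc
          _ = f (d n, d (n+1), d n) := by rw [norm_sub_rev (x (n+1)) (x n)]
      exact hkA _ _ (hd0 _) (hd0 _) (Or.inl hc')
  have hdgeo : ∀ n, d n ≤ d 0 * k ^ n := by
    intro n
    induction n with
    | zero => simp
    | succ m ih =>
      calc d (m+1) ≤ k * d m := hdstep m
        _ ≤ k * (d 0 * k ^ m) := mul_le_mul_of_nonneg_left ih hk0
        _ = d 0 * k ^ (m+1) := by ring
  have hcauchy : CauchySeq x :=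
    cauchySeq_of_le_geometric k (d 0) hk1 (fun n => by rw [dist_eq_norm]; exact hdgeo n)
  obtain ⟨p, hp⟩ := cauchySeq_tendsto_of_complete hcauchy
  have hrp : Tendsto (fun n => ‖p - x n‖) atTop (𝓝 0) := by
    simpa [norm_sub_rev] using tendsto_iff_norm_sub_tendsto_zero.mp hp
  have hdto0 : Tendsto d atTop (𝓝 0) :=
    squeeze_zero hd0 hdgeo
      (by simpa using (tendsto_pow_atTop_nhds_zero_of_lt_one hk0 hk1).const_mul (d 0))
  -- S p = p
  have hSp : S p = p := by
    by_contra hne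
    have hqpos : 0 < ‖p - S p‖ := by
      rw [norm_pos_iff, sub_ne_zero]
      exact fun h => hne h.symm
    set q := ‖p - S p‖ with hqdef
    have hfq : f (0, q, 0) < q := by
      by_contra h
      push_neg at h
      have := hkA q 0 hqpos.le le_rfl (Or.inl h)
      simp at this; linarith
    have hηpos : 0 < q - f (0, q, 0) := by linarith
    have hmempt : ((0:ℝ), q, (0:ℝ)) ∈ A := ⟨le_rfl, hqpos.le, le_rfl⟩
    have hseq : Tendsto (fun n => (‖p - x n‖, q, d n)) atTop (𝓝[A] (0, q, 0)) := by
      rw [tendsto_nhdsWithin_iff]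
      constructor
      · exact hrp.prodMk_nhds (tendsto_const_nhds.prodMk_nhds hdto0)
      · exact Filter.Eventually.of_forall (fun n => ⟨norm_nonneg _, hqpos.le, hd0 n⟩)
    have hft : Tendsto (fun n => f (‖p - x n‖, q, d n)) atTop (𝓝 (f (0, q, 0))) :=
      ((hcont _ hmempt).tendsto).comp hseq
    have hev1 : ∀ᶠ n in atTop, f (‖p - x n‖, q, d n) < f (0,q,0) + (q - f (0,q,0))/2 :=
      hft.eventually_lt_const (by linarith)
    have hev2 : ∀ᶠ n in atTop, ‖p - x (n+1)‖ < min (q/2) ((q - f (0,q,0))/2) := by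
      have ht : Tendsto (fun n => ‖p - x (n+1)‖) atTop (𝓝 0) :=
        hrp.comp (tendsto_add_atTop_nat 1)
      exact ht.eventually_lt_const (lt_min (by linarith) (by linarith))
    obtain ⟨n, h1, h2⟩ := (hev1.and hev2).exists
    by_cases hxn : p = x n
    · have he : q = ‖p - x (n+1)‖ := by rw [hxsucc, ← hxn]
      have := min_le_left (q/2) ((q - f (0,q,0))/2)
      rw [← he] at h2
      linarith
    · have hc := hS p (x n) hxn
      have e2 : ‖x n - S (x n)‖ = d n := by rw [← hxsucc n]
      rw [e2, ← hqdef] at hc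
      have hfinal : q ≤ ‖p - x (n+1)‖ + f (‖p - x n‖, q, d n) := by
        calc q = ‖(p - x (n+1)) + (x (n+1) - S p)‖ := by rw [hqdef]; congr 1; abel
          _ ≤ ‖p - x (n+1)‖ + ‖x (n+1) - S p‖ := norm_add_le _ _
          _ = ‖p - x (n+1)‖ + ‖S p - S (x n)‖ := by
              rw [hxsucc n, norm_sub_rev (S (x n)) (S p)]
          _ ≤ ‖p - x (n+1)‖ + f (‖p - x n‖, q, d n) := add_le_add le_rfl hc
      have := min_le_right (q/2) ((q - f (0,q,0))/2)
      linarith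
  -- quantitative well-posedness constant
  have hc0 : f (1, 0, 0) < 1 := by
    by_contra h
    push_neg at h
    have := hkA 1 0 zero_le_one le_rfl (Or.inr h)
    linarith
  set c : ℝ := (max (f (1,0,0)) 0 + 1) / 2 with hcdef
  have hc1 : c < 1 := by
    have : max (f (1,0,0)) 0 < 1 := max_lt hc0 one_pos
    rw [hcdef]; linarith
  have hcpos : 0 < c := by
    have := le_max_right (f (1,0,0)) 0
    rw [hcdef]; linarith
  have hfc : f (1,0,0) < c := by
    have := le_max_left (f (1,0,0)) 0
    rw [hcdef]; linarith
  have hmem1 : ((1:ℝ),(0:ℝ),(0:ℝ)) ∈ A := ⟨zero_le_one, le_rfl, le_rfl⟩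
  have hcw : ContinuousWithinAt (fun t : ℝ => f (1, t, 0)) (Set.Ici 0) 0 := by
    have hmap : Set.MapsTo (fun t : ℝ => ((1:ℝ), t, (0:ℝ))) (Set.Ici 0) A :=
      fun t ht => ⟨zero_le_one, ht, le_rfl⟩
    exact (hcont.comp ((continuous_const.prodMk
      (continuous_id.prodMk continuous_const)).continuousOn) hmap) 0 Set.self_mem_Ici
  have hevδ : ∀ᶠ t in 𝓝[Set.Ici 0] (0:ℝ), f (1, t, 0) < c :=
    hcw.eventually_lt_const hfc
  rw [Filter.eventually_iff, Metric.mem_nhdsWithin_iff] at hevδ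
  obtain ⟨δ', hδ'pos, hball⟩ := hevδ
  have hsmall : ∀ t : ℝ, 0 ≤ t → t ≤ δ'/2 → f (1, t, 0) < c := by
    intro t ht hle
    refine hball ⟨?_, ht⟩
    rw [Metric.mem_ball, Real.dist_eq, sub_zero, abs_of_nonneg ht]
    linarith
  set M : ℝ := max (δ'/2)⁻¹ (1 - c)⁻¹ with hMdef
  have hM0 : 0 ≤ M := le_trans (by positivity) (le_max_left _ _)
  have key : ∀ u : X, ‖u - p‖ ≤ M * ‖u - S u‖ := by
    intro u
    by_cases hu : u = p
    · simp only [hu, sub_self, norm_zero]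
      exact mul_nonneg hM0 (norm_nonneg _)
    have hr : 0 < ‖u - p‖ := by rw [norm_pos_iff, sub_ne_zero]; exact hu
    set r := ‖u - p‖ with hrdef
    set ε := ‖u - S u‖ with hεdef
    have hε0 : 0 ≤ ε := norm_nonneg _
    have hp0 : ‖p - S p‖ = (0:ℝ) := by rw [hSp, sub_self, norm_zero]
    have hcontr : ‖S u - S p‖ ≤ f (r, ε, 0) := by
      have h' := hS u p hu
      rw [hp0] at h'
      exact h'
    have hchain : r ≤ ε + f (r, ε, 0) := by
      calc r = ‖(u - S u) + (S u - p)‖ := by rw [hrdef]; congr 1; abel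
        _ ≤ ε + ‖S u - S p‖ := by rw [hSp]; exact norm_add_le _ _
        _ ≤ ε + f (r, ε, 0) := add_le_add le_rfl hcontr
    by_cases hcase : ε < (δ'/2) * r
    · have ht0 : 0 ≤ ε / r := div_nonneg hε0 hr.le
      have ht1 : ε / r ≤ δ'/2 := by
        rw [div_le_iff₀ hr]; linarith
      have hg := hsmall (ε/r) ht0 ht1
      have hhom' := hhom r⁻¹ (inv_pos.mpr hr) r ε 0 hr.le hε0 le_rfl
      have e : (r⁻¹ * r, r⁻¹ * ε, r⁻¹ * (0:ℝ)) = (1, ε/r, (0:ℝ)) := by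
        rw [inv_mul_cancel₀ hr.ne', mul_zero, inv_mul_eq_div]
      rw [e] at hhom'
      have hfr : f (r, ε, 0) ≤ r * f (1, ε/r, 0) := by
        have := mul_le_mul_of_nonneg_left hhom' hr.le
        rwa [← mul_assoc, mul_inv_cancel₀ hr.ne', one_mul] at this
      have hmul : r * f (1, ε/r, 0) ≤ r * c := mul_le_mul_of_nonneg_left hg.le hr.le
      have hrc : r ≤ ε + c * r := by linarith
      have : r ≤ (1 - c)⁻¹ * ε := by
        rw [inv_mul_eq_div, le_div_iff₀ (by linarith)]; linarith
      calc r ≤ (1 - c)⁻¹ * ε := this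
        _ ≤ M * ε := mul_le_mul_of_nonneg_right (le_max_right _ _) hε0
    · push_neg at hcase
      have : r ≤ (δ'/2)⁻¹ * ε := by
        rw [inv_mul_eq_div, le_div_iff₀ (by linarith)]; nlinarith
      calc r ≤ (δ'/2)⁻¹ * ε := this
        _ ≤ M * ε := mul_le_mul_of_nonneg_right (le_max_left _ _) hε0
  refine ⟨p, ⟨(hfixiff p).mp hSp, ?_⟩, ?_⟩
  · intro q hq
    have hSq : S q = q := (hfixiff q).mpr hq
    have := key q
    rw [hSq, sub_self, norm_zero, mul_zero] at this
    have h0 : ‖q - p‖ = 0 := le_antisymm this (norm_nonneg _)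
    exact sub_eq_zero.mp (norm_eq_zero.mp h0)
  · intro u hu
    have h1 : ∀ n, ‖u n - p‖ ≤ M * ((b+1)⁻¹ * ‖u n - T (u n)‖) := by
      intro n
      have := key (u n)
      rwa [hnsub] at this
    have h2 : Tendsto (fun n => M * ((b+1)⁻¹ * ‖u n - T (u n)‖)) atTop (𝓝 0) := by
      have := (hu.const_mul ((b+1)⁻¹)).const_mul M
      simpa using this
    exact squeeze_zero (fun n => norm_nonneg _) h1 h2
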